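/- arXiv:2005.13891 — 2 statements merged into one kernel-verified Lean document; each statement's English description precedes it below -/
import Mathlib

section
/- Let w be a weight sequence, H a separable complex Hilbert space, and A a compact operator on H. Suppose there is a sequence of Schur decompositions A = D_n + N_n, with normal parts D_n and quasi-nilpotent parts N_n ∈ E_{ẇ̄}(H), such that |N_n|_{ẇ̄} → 0 as n → ∞. Then A is normal. (Conversely, if A is normal then A = A + 0 is a Schur decomposition whose quasi-nilpotent part has gauge 0.) -/
open Filter Topology

noncomputable section

def IsWeight (w : ℕ → ℝ) : Prop :=
  (∀ k, 1 ≤ k → w (k + 1) ≤ w k) ∧ (∀ k, 1 ≤ k → 0 ≤ w k) ∧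
    Filter.Tendsto w Filter.atTop (nhds 0)

def sNum {H₁ H₂ : Type*} [NormedAddCommGroup H₁] [NormedSpace ℂ H₁]
    [NormedAddCommGroup H₂] [NormedSpace ℂ H₂] (k : ℕ) (A : H₁ →L[ℂ] H₂) : ℝ :=
  sInf {c : ℝ | ∃ F : H₁ →L[ℂ] H₂,
    Module.rank ℂ (LinearMap.range (F : H₁ →ₗ[ℂ] H₂)) < (k : Cardinal) ∧ c = ‖A - F‖}

def MemE {H₁ H₂ : Type*} [NormedAddCommGroup H₁] [NormedSpace ℂ H₁]
    [NormedAddCommGroup H₂] [NormedSpace ℂ H₂] (w : ℕ → ℝ) (A : H₁ →L[ℂ] H₂) : Prop :=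
  IsCompactOperator A ∧ ∃ M : ℝ, 0 ≤ M ∧ ∀ k, 1 ≤ k → sNum k A ≤ M * w k

def gaugeE {H₁ H₂ : Type*} [NormedAddCommGroup H₁] [NormedSpace ℂ H₁]
    [NormedAddCommGroup H₂] [NormedSpace ℂ H₂] (w : ℕ → ℝ) (A : H₁ →L[ℂ] H₂) : ℝ :=
  sInf {M : ℝ | 0 ≤ M ∧ ∀ k, 1 ≤ k → sNum k A ≤ M * w k}

def dbl (w : ℕ → ℝ) (k : ℕ) : ℝ := w ((k + 1) / 2)

def gmean (w : ℕ → ℝ) (k : ℕ) : ℝ := (∏ n ∈ Finset.Icc 1 k, w n) ^ ((1 : ℝ) / (k : ℝ))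

def algMult {H : Type*} [NormedAddCommGroup H] [NormedSpace ℂ H] (A : H →L[ℂ] H) (z : ℂ) : ℕ :=
  Module.finrank ℂ (Module.End.maxGenEigenspace (A : H →ₗ[ℂ] H) z)

def IsEigSeq {H : Type*} [NormedAddCommGroup H] [NormedSpace ℂ H]
    (A : H →L[ℂ] H) (lam : ℕ → ℂ) : Prop :=
  (∀ k, 1 ≤ k → ‖lam (k + 1)‖ ≤ ‖lam k‖) ∧
  ∀ z : ℂ, z ≠ 0 →
    {k : ℕ | 1 ≤ k ∧ lam k = z}.Finite ∧ {k : ℕ | 1 ≤ k ∧ lam k = z}.ncard = algMult A z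

def IsSchurDecomp {H : Type*} [NormedAddCommGroup H] [InnerProductSpace ℂ H] [CompleteSpace H]
    (A D N : H →L[ℂ] H) : Prop :=
  A = D + N ∧ IsCompactOperator D ∧ IsCompactOperator N ∧ IsStarNormal D ∧
  (∀ z : ℂ, z ≠ 0 → algMult D z = algMult A z) ∧
  spectrum ℂ D = spectrum ℂ A ∧
  spectrum ℂ N = {0} ∧
  ∀ z : ℂ, z ∉ spectrum ℂ A →
    spectrum ℂ (Ring.inverse (algebraMap ℂ (H →L[ℂ] H) z - D) * N) = {0}

def Fw (C : ℝ) (w : ℕ → ℝ) (r : ℝ) : ℝ :=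
  (1 + r * w 1) *
    (1 + ∑' k : ℕ, (∏ n ∈ Finset.Icc 1 (k + 1), w n) ^ 2 * (C * r) ^ (2 * (k + 1)))

def Ftilde (C : ℝ) (w : ℕ → ℝ) (r : ℝ) : ℝ := r * Fw C w r

def specVar (s t : Set ℂ) : ℝ := ⨆ z : s, Metric.infDist (z : ℂ) t

def hausD (s t : Set ℂ) : ℝ := max (specVar s t) (specVar t s)

def pseudoSpec {H : Type*} [NormedAddCommGroup H] [NormedSpace ℂ H] [CompleteSpace H]
    (ε : ℝ) (A : H →L[ℂ] H) : Set ℂ :=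
  spectrum ℂ A ∪ {z : ℂ | z ∉ spectrum ℂ A ∧ 1 / ε < ‖resolvent A z‖}

variable {H : Type*} [NormedAddCommGroup H] [InnerProductSpace ℂ H] [CompleteSpace H]
  [TopologicalSpace.SeparableSpace H]

section Aux
variable {H₁ H₂ : Type*} [NormedAddCommGroup H₁] [NormedSpace ℂ H₁]
    [NormedAddCommGroup H₂] [NormedSpace ℂ H₂]

lemma sNum_one (A : H₁ →L[ℂ] H₂) : sNum 1 A = ‖A‖ := by
  have hset : {c : ℝ | ∃ F : H₁ →L[ℂ] H₂,
      Module.rank ℂ (LinearMap.range (F : H₁ →ₗ[ℂ] H₂)) < ((1:ℕ) : Cardinal) ∧ c = ‖A - F‖} = {‖A‖} := by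
    ext c
    constructor
    · rintro ⟨F, hF, rfl⟩
      have h0 : Module.rank ℂ (LinearMap.range (F : H₁ →ₗ[ℂ] H₂)) = 0 := by
        have := hF
        rw [Nat.cast_one, Cardinal.lt_one_iff_zero] at this
        exact this
      have hsub : Subsingleton (LinearMap.range (F : H₁ →ₗ[ℂ] H₂)) := rank_zero_iff.mp h0
      have hbot : LinearMap.range (F : H₁ →ₗ[ℂ] H₂) = ⊥ :=
        Submodule.eq_bot_of_subsingleton
      have hF0 : F = 0 := by
        have := LinearMap.range_eq_bot.mp hbot
        ext x
        exact congrFun (congrArg DFunLike.coe this) x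
      simp [hF0]
    · rintro rfl
      refine ⟨0, ?_, by simp⟩
      have h0 : LinearMap.range ((0 : H₁ →L[ℂ] H₂) : H₁ →ₗ[ℂ] H₂) = ⊥ := by ext x; simp [eq_comm]
      rw [h0, rank_bot]
      exact_mod_cast Nat.lt_of_lt_of_le Nat.zero_lt_one le_rfl
  rw [sNum, hset, csInf_singleton]

lemma sNum_zero_le (k : ℕ) (hk : 1 ≤ k) : sNum k (0 : H₁ →L[ℂ] H₂) ≤ 0 := by
  apply csInf_le
  · exact ⟨0, by rintro c ⟨F, -, rfl⟩; positivity⟩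
  · refine ⟨0, ?_, by simp⟩
    have h0 : LinearMap.range ((0 : H₁ →L[ℂ] H₂) : H₁ →ₗ[ℂ] H₂) = ⊥ := by ext x; simp [eq_comm]
    rw [h0, rank_bot]
    exact_mod_cast Nat.lt_of_lt_of_le Nat.zero_lt_one hk

lemma gaugeE_zero' (w : ℕ → ℝ) : gaugeE w (0 : H₁ →L[ℂ] H₂) = 0 := by
  have hmem : (0:ℝ) ∈ {M : ℝ | 0 ≤ M ∧ ∀ k, 1 ≤ k → sNum k (0 : H₁ →L[ℂ] H₂) ≤ M * w k} :=
    ⟨le_rfl, fun k hk => by simpa using sNum_zero_le k hk⟩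
  exact le_antisymm (csInf_le ⟨0, fun x hx => hx.1⟩ hmem) (le_csInf ⟨0, hmem⟩ fun M hM => hM.1)

lemma sNum_le_gauge (w : ℕ → ℝ) (A : H₁ →L[ℂ] H₂) (h : MemE w A)
    (k : ℕ) (hk : 1 ≤ k) (hwk : 0 ≤ w k) :
    sNum k A ≤ gaugeE w A * w k := by
  obtain ⟨-, M, hM0, hMb⟩ := h
  set S := {M : ℝ | 0 ≤ M ∧ ∀ k, 1 ≤ k → sNum k A ≤ M * w k} with hS
  have hne : S.Nonempty := ⟨M, hM0, hMb⟩
  rcases eq_or_lt_of_le hwk with h0 | hpos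
  · have := hMb k hk
    rw [← h0] at this ⊢
    simpa using this
  · by_contra hcon
    push_neg at hcon
    have hlt : gaugeE w A < sNum k A / w k := (lt_div_iff₀ hpos).mpr hcon
    obtain ⟨M', hM'S, hM'lt⟩ := exists_lt_of_csInf_lt hne hlt
    have h1 : M' * w k < sNum k A := (lt_div_iff₀ hpos).mp hM'lt
    exact absurd (hM'S.2 k hk) (not_le.mpr h1)

end Aux

/-- if the quasi-nilpotent parts of a sequence of Schur
decompositions of `A` have `ẇ̄`-gauges tending to `0`, then `A` is normal;
conversely a normal `A` has Schur decomposition `A = A + 0` with gauge-0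
quasi-nilpotent part. -/
theorem stmt_9 [Nontrivial H] (w : ℕ → ℝ) (hw : IsWeight w)
    (A : H →L[ℂ] H) (hA : IsCompactOperator A)
    (D N : ℕ → (H →L[ℂ] H))
    (hSchur : ∀ n, IsSchurDecomp A (D n) (N n))
    (hmem : ∀ n, MemE (dbl (gmean w)) (N n))
    (hlim : Filter.Tendsto (fun n => gaugeE (dbl (gmean w)) (N n))
      Filter.atTop (nhds 0)) :
    IsStarNormal A ∧
      (IsStarNormal A →
        IsSchurDecomp A A 0 ∧ gaugeE (dbl (gmean w)) (0 : H →L[ℂ] H) = 0) := by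
  have hw1 : dbl (gmean w) 1 = w 1 := by
    simp [dbl, gmean]
  have hw1nn : 0 ≤ w 1 := hw.2.1 1 le_rfl
  have hNle : ∀ n, ‖N n‖ ≤ gaugeE (dbl (gmean w)) (N n) * w 1 := by
    intro n
    have := sNum_le_gauge (dbl (gmean w)) (N n) (hmem n) 1 le_rfl (by rw [hw1]; exact hw1nn)
    rwa [sNum_one, hw1] at this
  have hN0 : Tendsto N atTop (nhds (0 : H →L[ℂ] H)) := by
    rw [tendsto_zero_iff_norm_tendsto_zero]
    refine squeeze_zero (fun n => norm_nonneg _) hNle ?_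
    simpa using hlim.mul_const (w 1)
  have hDeq : ∀ n, D n = A - N n := by
    intro n
    have h := (hSchur n).1
    rw [h]
    abel
  have hD : Tendsto D atTop (nhds A) := by
    have : Tendsto (fun n => A - N n) atTop (nhds A) := by
      simpa using (tendsto_const_nhds (x := A) (f := atTop)).sub hN0
    simpa [← hDeq] using this
  have hnorm : IsStarNormal A := by
    constructor
    have h1 : Tendsto (fun n => star (D n) * D n) atTop (nhds (star A * A)) :=
      (hD.star).mul hD
    have h2 : Tendsto (fun n => star (D n) * D n) atTop (nhds (A * star A)) := by
      have heq : (fun n => star (D n) * D n) = fun n => D n * star (D n) := by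
        funext n
        exact ((hSchur n).2.2.2.1).star_comm_self
      rw [heq]
      exact hD.mul hD.star
    exact tendsto_nhds_unique h1 h2
  refine ⟨hnorm, fun hn => ⟨⟨(add_zero A).symm, hA, isCompactOperator_zero, hn,
    fun z _ => rfl, rfl, spectrum.zero_eq, fun z hz => ?_⟩, gaugeE_zero' _⟩⟩
  rw [mul_zero]
  exact spectrum.zero_eq


end
end

section
/- Let w be a weight sequence, H a separable complex Hilbert space, and A ∈ E_w(H) a non-normal operator with a Schur decomposition A = D + N whose quasi-nilpotent part N satisfies |N|_{ẇ̄} > 0. Let C > 0 be a constant such that ‖Q^{2k}‖ ≤ C^{2k}·(s_1(Q)⋯s_k(Q))² for every k ≥ 1 and every quasi-nilpotent compact operator Q on H. Then for every bounded operator B on H, d̂(σ(B),σ(A)) ≤ |N|_{ẇ̄} · H_w( ‖A−B‖ / |N|_{ẇ̄} ). -/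
open Filter Topology

noncomputable section

set_option linter.unusedSectionVars false

section AuxLemmas

open Pointwise

variable {H : Type*} [NormedAddCommGroup H] [InnerProductSpace ℂ H] [CompleteSpace H]

/-! ### singular number lemmas -/

lemma sNum_set_nonempty (k : ℕ) (hk : 1 ≤ k) (A : H →L[ℂ] H) :
    ‖A‖ ∈ {c : ℝ | ∃ F : H →L[ℂ] H,
      Module.rank ℂ (LinearMap.range (F : H →ₗ[ℂ] H)) < (k : Cardinal) ∧ c = ‖A - F‖} := by
  refine ⟨0, ?_, by simp⟩
  have : LinearMap.range ((0 : H →L[ℂ] H) : H →ₗ[ℂ] H) = ⊥ := by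
    rw [ContinuousLinearMap.coe_zero]; exact LinearMap.range_zero
  rw [this]
  simp only [rank_bot]
  exact_mod_cast Nat.pos_of_ne_zero (by omega)

lemma sNum_nonneg (k : ℕ) (A : H →L[ℂ] H) : 0 ≤ sNum k A := by
  apply Real.sInf_nonneg
  rintro c ⟨F, -, rfl⟩; exact norm_nonneg _

lemma sNum_bddBelow (k : ℕ) (A : H →L[ℂ] H) :
    BddBelow {c : ℝ | ∃ F : H →L[ℂ] H,
      Module.rank ℂ (LinearMap.range (F : H →ₗ[ℂ] H)) < (k : Cardinal) ∧ c = ‖A - F‖} :=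
  ⟨0, by rintro c ⟨F, -, rfl⟩; exact norm_nonneg _⟩

lemma norm_le_sNum_one (A : H →L[ℂ] H) : ‖A‖ ≤ sNum 1 A := by
  apply le_csInf ⟨‖A‖, sNum_set_nonempty 1 le_rfl A⟩
  rintro c ⟨F, hF, rfl⟩
  have hF0 : F = 0 := by
    have h0 : Module.rank ℂ (LinearMap.range (F : H →ₗ[ℂ] H)) = 0 :=
      Cardinal.lt_one_iff_zero.mp (by exact_mod_cast hF)
    have hsub : Subsingleton (LinearMap.range (F : H →ₗ[ℂ] H)) := by
      rw [← rank_zero_iff (R := ℂ)]; exact h0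
    have hbot : LinearMap.range (F : H →ₗ[ℂ] H) = ⊥ := by
      rw [Submodule.eq_bot_iff]
      intro x hx
      have := Subsingleton.elim (⟨x, hx⟩ : LinearMap.range (F : H →ₗ[ℂ] H)) ⟨0, (LinearMap.range (F : H →ₗ[ℂ] H)).zero_mem⟩
      simpa using congrArg Subtype.val this
    ext x
    have : F x ∈ LinearMap.range (F : H →ₗ[ℂ] H) := LinearMap.mem_range_self _ x
    rw [hbot] at this
    simpa using this
  simp [hF0]

lemma sNum_comp_le (k : ℕ) (hk : 1 ≤ k) (R N : H →L[ℂ] H) :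
    sNum k (R * N) ≤ ‖R‖ * sNum k N := by
  have hne : {c : ℝ | ∃ F : H →L[ℂ] H,
      Module.rank ℂ (LinearMap.range (F : H →ₗ[ℂ] H)) < (k : Cardinal) ∧ c = ‖N - F‖}.Nonempty :=
    ⟨‖N‖, sNum_set_nonempty k hk N⟩
  have key : ∀ F : H →L[ℂ] H, Module.rank ℂ (LinearMap.range (F : H →ₗ[ℂ] H)) < (k : Cardinal) →
      sNum k (R * N) ≤ ‖R‖ * ‖N - F‖ := by
    intro F hF
    have hrank : Module.rank ℂ (LinearMap.range ((R * F : H →L[ℂ] H) : H →ₗ[ℂ] H)) < (k : Cardinal) := by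
      refine lt_of_le_of_lt ?_ hF
      have : LinearMap.range ((R : H →ₗ[ℂ] H).comp (F : H →ₗ[ℂ] H)) =
          Submodule.map (R : H →ₗ[ℂ] H) (LinearMap.range (F : H →ₗ[ℂ] H)) := LinearMap.range_comp _ _
      calc Module.rank ℂ (LinearMap.range ((R * F : H →L[ℂ] H) : H →ₗ[ℂ] H))
          = Module.rank ℂ (Submodule.map (R : H →ₗ[ℂ] H) (LinearMap.range (F : H →ₗ[ℂ] H))) := by
            rw [← this]; rfl
        _ ≤ Module.rank ℂ (LinearMap.range (F : H →ₗ[ℂ] H)) := rank_map_le _ _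
    have hmem : ‖R * N - R * F‖ ∈ {c : ℝ | ∃ F' : H →L[ℂ] H,
        Module.rank ℂ (LinearMap.range (F' : H →ₗ[ℂ] H)) < (k : Cardinal) ∧ c = ‖R * N - F'‖} :=
      ⟨R * F, hrank, rfl⟩
    refine (csInf_le (sNum_bddBelow k _) hmem).trans ?_
    rw [← mul_sub]
    exact norm_mul_le R (N - F)
  refine le_of_forall_pos_le_add fun ε hε => ?_
  obtain ⟨c, ⟨F, hF, rfl⟩, hc⟩ := Real.lt_sInf_add_pos hne (div_pos hε (by positivity) :
    0 < ε / (‖R‖ + 1))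
  calc sNum k (R * N) ≤ ‖R‖ * ‖N - F‖ := key F hF
    _ ≤ ‖R‖ * (sNum k N + ε / (‖R‖ + 1)) := by
        refine mul_le_mul_of_nonneg_left hc.le (norm_nonneg _)
    _ ≤ ‖R‖ * sNum k N + ε := by
        rw [mul_add]
        have : ‖R‖ * (ε / (‖R‖ + 1)) ≤ ε := by
          rw [mul_div_assoc']
          rw [div_le_iff₀ (by positivity)]
          nlinarith [norm_nonneg R]
        linarith

/-! ### weight sequence lemmas -/

lemma gmean_nonneg {w : ℕ → ℝ} (hw : IsWeight w) (k : ℕ) : 0 ≤ gmean w k := by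
  apply Real.rpow_nonneg
  exact Finset.prod_nonneg fun n hn => hw.2.1 n (Finset.mem_Icc.mp hn).1

lemma dbl_gmean_nonneg {w : ℕ → ℝ} (hw : IsWeight w) (k : ℕ) : 0 ≤ dbl (gmean w) k :=
  gmean_nonneg hw _

lemma gmean_eventually_le {w : ℕ → ℝ} (hw : IsWeight w) {ε : ℝ} (hε : 0 < ε) :
    ∀ᶠ m in atTop, gmean w m ≤ ε := by
  obtain ⟨K, hK⟩ := (Metric.tendsto_atTop.mp hw.2.2 (ε/2) (by linarith))
  set K' := max K 1 with hK'def
  have hK'1 : 1 ≤ K' := le_max_right _ _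
  have hbound : ∀ n, K' ≤ n → w n ≤ ε/2 := by
    intro n hn
    have := hK n (le_trans (le_max_left _ _) hn)
    rw [Real.dist_eq, sub_zero] at this
    exact (abs_lt.mp this).2.le
  set P : ℝ := ∏ n ∈ Finset.Icc 1 (K' - 1), w n with hP
  have hPnn : 0 ≤ P := Finset.prod_nonneg fun n hn => hw.2.1 n (Finset.mem_Icc.mp hn).1
  have hprod : ∀ m, K' ≤ m → ∏ n ∈ Finset.Icc 1 m, w n ≤ P * (ε/2) ^ (m - K' + 1) := by
    intro m hm
    have hsplit : Finset.Icc 1 m = Finset.Icc 1 (K'-1) ∪ Finset.Icc K' m := by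
      ext a
      simp only [Finset.mem_union, Finset.mem_Icc]
      omega
    have hdisj : Disjoint (Finset.Icc 1 (K'-1)) (Finset.Icc K' m) := by
      rw [Finset.disjoint_left]
      intro a ha hb
      have := (Finset.mem_Icc.mp ha).2
      have := (Finset.mem_Icc.mp hb).1
      omega
    rw [hsplit, Finset.prod_union hdisj]
    have h2 : ∏ n ∈ Finset.Icc K' m, w n ≤ (ε/2) ^ (m - K' + 1) := by
      have hcard : (Finset.Icc K' m).card = m - K' + 1 := by
        rw [Nat.card_Icc]; omega
      calc ∏ n ∈ Finset.Icc K' m, w n ≤ ∏ n ∈ Finset.Icc K' m, (ε/2) := by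
            apply Finset.prod_le_prod
            · intro n hn; exact hw.2.1 n (le_trans hK'1 (Finset.mem_Icc.mp hn).1)
            · intro n hn; exact hbound n (Finset.mem_Icc.mp hn).1
        _ = (ε/2) ^ (m - K' + 1) := by rw [Finset.prod_const, hcard]
    exact mul_le_mul_of_nonneg_left h2 hPnn
  by_cases hP0 : P = 0
  · filter_upwards [eventually_ge_atTop K'] with m hm
    have h1 : ∏ n ∈ Finset.Icc 1 m, w n ≤ 0 := by
      have := hprod m hm; rw [hP0] at this; simpa using this
    have h1' : ∏ n ∈ Finset.Icc 1 m, w n = 0 :=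
      le_antisymm h1 (Finset.prod_nonneg fun n hn => hw.2.1 n (Finset.mem_Icc.mp hn).1)
    rw [gmean, h1', Real.zero_rpow]
    · exact hε.le
    · have : 1 ≤ m := le_trans hK'1 hm
      positivity
  · have hPpos : 0 < P := lt_of_le_of_ne hPnn (Ne.symm hP0)
    have hδ : (0:ℝ) < ε/2 := by linarith
    have htend : Tendsto (fun m : ℕ => (P * (ε/2) ^ (m - K' + 1)) ^ ((1:ℝ)/(m:ℝ)))
        atTop (nhds (ε/2)) := by
      have heq : ∀ᶠ m : ℕ in atTop, (P * (ε/2) ^ (m - K' + 1)) ^ ((1:ℝ)/(m:ℝ)) =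
          Real.exp ((Real.log P + ((m:ℝ) - K' + 1) * Real.log (ε/2)) / m) := by
        filter_upwards [eventually_ge_atTop (max K' 1)] with m hm
        have hm1 : 1 ≤ m := le_trans (le_max_right _ _) hm
        have hmK : K' ≤ m := le_trans (le_max_left _ _) hm
        have hpos : 0 < P * (ε/2) ^ (m - K' + 1) := by positivity
        rw [← Real.exp_log hpos, ← Real.exp_mul]
        congr 1
        rw [Real.log_mul (ne_of_gt hPpos) (by positivity), Real.log_pow]
        have : ((m - K' + 1 : ℕ) : ℝ) = (m:ℝ) - K' + 1 := by
          push_cast [Nat.cast_sub hmK]; ring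
        rw [this]
        field_simp
      rw [tendsto_congr' heq]
      have hcast : Tendsto (fun m : ℕ => (m:ℝ)) atTop atTop := tendsto_natCast_atTop_atTop
      have h1 : Tendsto (fun m : ℕ => Real.log P / (m:ℝ)) atTop (nhds 0) :=
        tendsto_const_nhds.div_atTop hcast
      have h2 : Tendsto (fun m : ℕ => ((1:ℝ) - (K':ℝ)) / (m:ℝ)) atTop (nhds 0) :=
        tendsto_const_nhds.div_atTop hcast
      have h3 : Tendsto (fun m : ℕ => (((m:ℝ) - K' + 1) / (m:ℝ)) * Real.log (ε/2))
          atTop (nhds (Real.log (ε/2))) := by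
        have heq3 : (fun m : ℕ => (((m:ℝ) - K' + 1) / (m:ℝ))) =ᶠ[atTop]
            (fun m : ℕ => 1 + ((1:ℝ) - (K':ℝ)) / (m:ℝ)) := by
          filter_upwards [eventually_ge_atTop 1] with m hm
          have hm0 : (m:ℝ) ≠ 0 := by positivity
          field_simp
          ring
        have h4 : Tendsto (fun m : ℕ => (((m:ℝ) - K' + 1) / (m:ℝ))) atTop (nhds 1) := by
          rw [tendsto_congr' heq3]
          simpa using tendsto_const_nhds.add h2
        simpa using h4.mul_const (Real.log (ε/2))
      have h5 : Tendsto (fun m : ℕ => (Real.log P + ((m:ℝ) - K' + 1) * Real.log (ε/2)) / (m:ℝ))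
          atTop (nhds (Real.log (ε/2))) := by
        have heq2 : ∀ m : ℕ, (Real.log P + ((m:ℝ) - K' + 1) * Real.log (ε/2)) / (m:ℝ) =
            Real.log P / (m:ℝ) + (((m:ℝ) - K' + 1)/(m:ℝ)) * Real.log (ε/2) := by
          intro m; ring
        simp_rw [heq2]
        simpa using h1.add h3
      have h6 := (Real.continuous_exp.tendsto _).comp h5
      simpa [Function.comp_def, Real.exp_log hδ] using h6
    have hlt : ∀ᶠ m in atTop, (P * (ε/2) ^ (m - K' + 1)) ^ ((1:ℝ)/(m:ℝ)) < ε :=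
      htend.eventually_lt_const (by linarith)
    filter_upwards [hlt, eventually_ge_atTop K'] with m hm1 hm2
    refine le_trans ?_ hm1.le
    rw [gmean]
    apply Real.rpow_le_rpow
    · exact Finset.prod_nonneg fun n hn => hw.2.1 n (Finset.mem_Icc.mp hn).1
    · exact hprod m hm2
    · positivity

lemma dbl_gmean_eventually_le {w : ℕ → ℝ} (hw : IsWeight w) {ε : ℝ} (hε : 0 < ε) :
    ∀ᶠ m in atTop, dbl (gmean w) m ≤ ε := by
  obtain ⟨K, hK⟩ := (gmean_eventually_le hw hε).exists_forall_of_atTop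
  filter_upwards [eventually_ge_atTop (2*K)] with m hm
  exact hK _ (by omega)

lemma summable_weight {w : ℕ → ℝ} (hw : IsWeight w) {x : ℝ} (hx : 0 ≤ x) :
    Summable (fun k : ℕ =>
      (∏ n ∈ Finset.Icc 1 (k + 1), dbl (gmean w) n) ^ 2 * x ^ (2 * (k + 1))) := by
  rcases eq_or_lt_of_le hx with h0 | hxpos
  · apply summable_of_ne_finset_zero (s := ∅)
    intro k _
    rw [← h0]
    simp
  · apply summable_of_ratio_norm_eventually_le (r := 1/2) (by norm_num)
    have hε : (0:ℝ) < Real.sqrt (1/2) / x := by positivity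
    obtain ⟨K, hK⟩ := (dbl_gmean_eventually_le hw hε).exists_forall_of_atTop
    filter_upwards [eventually_ge_atTop K] with k hk
    have hterm : ∀ j : ℕ,
        0 ≤ (∏ n ∈ Finset.Icc 1 (j + 1), dbl (gmean w) n) ^ 2 * x ^ (2 * (j + 1)) := by
      intro j; positivity
    rw [Real.norm_of_nonneg (hterm _), Real.norm_of_nonneg (hterm _)]
    have hsplit : ∏ n ∈ Finset.Icc 1 (k + 2), dbl (gmean w) n =
        (∏ n ∈ Finset.Icc 1 (k + 1), dbl (gmean w) n) * dbl (gmean w) (k + 2) := by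
      rw [← Finset.prod_Icc_succ_top (by omega)]
    have hw2 : dbl (gmean w) (k+2) ≤ Real.sqrt (1/2) / x := hK (k+2) (by omega)
    have hprod_nn : 0 ≤ ∏ n ∈ Finset.Icc 1 (k + 1), dbl (gmean w) n :=
      Finset.prod_nonneg fun n _ => dbl_gmean_nonneg hw n
    have hx2 : x ^ (2 * (k + 2)) = x ^ (2 * (k+1)) * x^2 := by ring
    rw [hsplit, mul_pow, hx2]
    have hkey : (dbl (gmean w) (k+2))^2 * x^2 ≤ 1/2 := by
      have h1 : (dbl (gmean w) (k+2))^2 ≤ (Real.sqrt (1/2) / x)^2 := by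
        apply sq_le_sq' _ hw2
        have := dbl_gmean_nonneg hw (k+2)
        nlinarith [hε]
      have h2 : (Real.sqrt (1/2) / x)^2 * x^2 = 1/2 := by
        rw [div_pow, Real.sq_sqrt (by norm_num)]
        field_simp
      nlinarith [sq_nonneg x, sq_nonneg (dbl (gmean w) (k+2))]
    calc (∏ n ∈ Finset.Icc 1 (k + 1), dbl (gmean w) n) ^ 2 * (dbl (gmean w) (k+2))^2 *
          (x ^ (2*(k+1)) * x^2)
        = ((dbl (gmean w) (k+2))^2 * x^2) *
            ((∏ n ∈ Finset.Icc 1 (k + 1), dbl (gmean w) n) ^ 2 * x ^ (2*(k+1))) := by ring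
      _ ≤ (1/2) * ((∏ n ∈ Finset.Icc 1 (k + 1), dbl (gmean w) n) ^ 2 * x ^ (2*(k+1))) := by
          apply mul_le_mul_of_nonneg_right hkey (hterm k)

/-! ### Fw lemmas -/

lemma Fw_one_le {w : ℕ → ℝ} (hw : IsWeight w) (C : ℝ) {r : ℝ} (hr : 0 ≤ r) :
    1 ≤ Fw C (dbl (gmean w)) r := by
  rw [Fw]
  have h1 : 0 ≤ r * dbl (gmean w) 1 := mul_nonneg hr (dbl_gmean_nonneg hw 1)
  have h2 : 0 ≤ ∑' k : ℕ,
      (∏ n ∈ Finset.Icc 1 (k + 1), dbl (gmean w) n) ^ 2 * (C * r) ^ (2 * (k + 1)) := by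
    apply tsum_nonneg
    intro k
    exact mul_nonneg (sq_nonneg _) ((even_two_mul (k+1)).pow_nonneg _)
  nlinarith

lemma Ftilde_lt {w : ℕ → ℝ} (hw : IsWeight w) {C : ℝ} (hC : 0 < C) {a b : ℝ}
    (ha : 0 ≤ a) (hab : a < b) :
    Ftilde C (dbl (gmean w)) a < Ftilde C (dbl (gmean w)) b := by
  have hb : 0 < b := lt_of_le_of_lt ha hab
  have hFa : Fw C (dbl (gmean w)) a ≤ Fw C (dbl (gmean w)) b := by
    rw [Fw, Fw]
    have hsa : Summable (fun k : ℕ =>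
        (∏ n ∈ Finset.Icc 1 (k + 1), dbl (gmean w) n) ^ 2 * (C * a) ^ (2 * (k + 1))) :=
      summable_weight hw (by positivity)
    have hsb : Summable (fun k : ℕ =>
        (∏ n ∈ Finset.Icc 1 (k + 1), dbl (gmean w) n) ^ 2 * (C * b) ^ (2 * (k + 1))) :=
      summable_weight hw (by positivity)
    have hts : ∑' k : ℕ,
        (∏ n ∈ Finset.Icc 1 (k + 1), dbl (gmean w) n) ^ 2 * (C * a) ^ (2 * (k + 1)) ≤
        ∑' k : ℕ,
        (∏ n ∈ Finset.Icc 1 (k + 1), dbl (gmean w) n) ^ 2 * (C * b) ^ (2 * (k + 1)) := by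
      apply Summable.tsum_le_tsum _ hsa hsb
      intro k
      apply mul_le_mul_of_nonneg_left _ (by positivity)
      apply pow_le_pow_left₀ (by positivity)
      nlinarith
    have h1 : 1 + a * dbl (gmean w) 1 ≤ 1 + b * dbl (gmean w) 1 := by
      have := dbl_gmean_nonneg hw 1
      nlinarith
    have hta : 0 ≤ ∑' k : ℕ,
        (∏ n ∈ Finset.Icc 1 (k + 1), dbl (gmean w) n) ^ 2 * (C * a) ^ (2 * (k + 1)) :=
      tsum_nonneg (fun k => by positivity)
    have h2 : (0:ℝ) ≤ 1 + a * dbl (gmean w) 1 := by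
      have := dbl_gmean_nonneg hw 1
      nlinarith
    apply mul_le_mul h1 (by linarith) (by linarith) (by nlinarith [dbl_gmean_nonneg hw 1])
  have hFbpos : 1 ≤ Fw C (dbl (gmean w)) b := Fw_one_le hw C hb.le
  rw [Ftilde, Ftilde]
  calc a * Fw C (dbl (gmean w)) a ≤ a * Fw C (dbl (gmean w)) b :=
        mul_le_mul_of_nonneg_left hFa ha
    _ < b * Fw C (dbl (gmean w)) b := by nlinarith

/-! ### gauge lemma -/

lemma gauge_spec (v : ℕ → ℝ) (hvn : ∀ k, 0 ≤ v k) (N : H →L[ℂ] H)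
    (hν : 0 < gaugeE v N) : ∀ k, 1 ≤ k → sNum k N ≤ gaugeE v N * v k := by
  have hne : {M : ℝ | 0 ≤ M ∧ ∀ k, 1 ≤ k → sNum k N ≤ M * v k}.Nonempty := by
    by_contra h
    rw [Set.not_nonempty_iff_eq_empty] at h
    have : gaugeE v N = 0 := by
      rw [gaugeE, h, Real.sInf_empty]
    rw [this] at hν
    exact lt_irrefl 0 hν
  intro k hk
  refine le_of_forall_pos_le_add fun ε hε => ?_
  obtain ⟨M, hM, hMlt⟩ := Real.lt_sInf_add_pos hne
    (div_pos hε (by linarith [hvn k]) : 0 < ε / (v k + 1))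
  calc sNum k N ≤ M * v k := hM.2 k hk
    _ ≤ (sInf {M : ℝ | 0 ≤ M ∧ ∀ k, 1 ≤ k → sNum k N ≤ M * v k} + ε / (v k + 1)) * v k :=
        mul_le_mul_of_nonneg_right hMlt.le (hvn k)
    _ ≤ gaugeE v N * v k + ε := by
        rw [gaugeE, add_mul]
        have h1 : ε / (v k + 1) * v k ≤ ε := by
          rw [div_mul_eq_mul_div, div_le_iff₀ (by linarith [hvn k])]
          nlinarith [hvn k]
        linarith

/-! ### normal resolvent lemmas -/

lemma starNormal_shift (D : H →L[ℂ] H) (hD : IsStarNormal D) (z : ℂ) :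
    IsStarNormal (algebraMap ℂ (H →L[ℂ] H) z - D) := by
  constructor
  rw [star_sub]
  have hs : star (algebraMap ℂ (H →L[ℂ] H) z) = algebraMap ℂ (H →L[ℂ] H) (star z) :=
    (algebraMap_star_comm z).symm
  have c1 : Commute (star (algebraMap ℂ (H →L[ℂ] H) z)) (algebraMap ℂ (H →L[ℂ] H) z) := by
    rw [hs]; exact (Algebra.commutes _ _)
  have c2 : Commute (star (algebraMap ℂ (H →L[ℂ] H) z)) D := by
    rw [hs]; exact (Algebra.commutes _ _)
  have c3 : Commute (star D) (algebraMap ℂ (H →L[ℂ] H) z) := (Algebra.commutes _ _).symm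
  have c4 : Commute (star D) D := hD.star_comm_self
  exact (c1.sub_right c2).sub_left (c3.sub_right c4)

lemma starNormal_ring_inverse {T : H →L[ℂ] H} (h : IsStarNormal T) :
    IsStarNormal (Ring.inverse T) := by
  constructor
  have h1 : star T * T = T * star T := h.star_comm_self
  show star (Ring.inverse T) * Ring.inverse T = Ring.inverse T * star (Ring.inverse T)
  have hC1 : Commute (star T) T := h.star_comm_self
  have hC2 : Commute T (star T) := hC1.symm
  rw [← Ring.inverse_star, ← Ring.mul_inverse_rev' hC2, ← Ring.mul_inverse_rev' hC1, h1]

lemma norm_ring_inverse_le (D : H →L[ℂ] H) (hD : IsStarNormal D) (z : ℂ)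
    (hz : z ∉ spectrum ℂ D) {d : ℝ} (hd : 0 < d)
    (hdist : ∀ μ ∈ spectrum ℂ D, d ≤ ‖z - μ‖) :
    ‖Ring.inverse (algebraMap ℂ (H →L[ℂ] H) z - D)‖ ≤ 1/d := by
  set T := algebraMap ℂ (H →L[ℂ] H) z - D with hTdef
  have hT : IsUnit T := spectrum.notMem_iff.mp hz
  haveI hTn : IsStarNormal T := starNormal_shift D hD z
  haveI hRn : IsStarNormal (Ring.inverse T) := starNormal_ring_inverse hTn
  have hrad : spectralRadius ℂ (Ring.inverse T) = ‖Ring.inverse T‖₊ :=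
    IsStarNormal.spectralRadius_eq_nnnorm _
  have hspec : ∀ lam ∈ spectrum ℂ (Ring.inverse T), ‖lam‖ ≤ 1/d := by
    intro lam hlam
    obtain ⟨u, hu⟩ := hT
    have h0 : lam ≠ 0 := by
      intro h
      rw [h] at hlam
      have : IsUnit (Ring.inverse T) := by
        rw [← hu, Ring.inverse_unit]; exact u⁻¹.isUnit
      exact spectrum.zero_notMem ℂ this hlam
    have hinv : lam⁻¹ ∈ spectrum ℂ T := by
      have hlam' : ((Units.mk0 lam h0 : ℂˣ) : ℂ) ∈
          spectrum ℂ ((u⁻¹ : (H →L[ℂ] H)ˣ) : H →L[ℂ] H) := by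
        have : Ring.inverse T = ((u⁻¹ : (H →L[ℂ] H)ˣ) : H →L[ℂ] H) := by
          rw [← hu, Ring.inverse_unit]
        rwa [this] at hlam
      have := spectrum.inv_mem_iff.mp hlam'
      simpa [hu] using this
    have hTspec : spectrum ℂ T = {z} - spectrum ℂ D := (spectrum.singleton_sub_eq D z).symm
    rw [hTspec] at hinv
    obtain ⟨a, ha, b, hb, hab⟩ := Set.mem_sub.mp hinv
    rw [Set.mem_singleton_iff] at ha
    subst ha
    have hnorm : d ≤ ‖lam‖⁻¹ := by
      rw [← norm_inv, ← hab]; exact hdist b hb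
    have hl : 0 < ‖lam‖ := norm_pos_iff.mpr h0
    rw [le_div_iff₀ hd]
    have h2 := mul_le_mul_of_nonneg_left hnorm hl.le
    rwa [mul_inv_cancel₀ (ne_of_gt hl)] at h2
  have hle : spectralRadius ℂ (Ring.inverse T) ≤ ENNReal.ofReal (1/d) := by
    rw [spectralRadius]
    refine iSup₂_le fun lam hlam => ?_
    rw [← ENNReal.ofReal_coe_nnreal, coe_nnnorm]
    exact ENNReal.ofReal_le_ofReal (hspec lam hlam)
  rw [hrad] at hle
  have h3 := ENNReal.toReal_mono (by simp) hle
  rw [ENNReal.toReal_ofReal (by positivity : (0:ℝ) ≤ 1/d)] at h3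
  simpa using h3

/-! ### Neumann series lemmas -/

lemma neumann {A : Type*} [NormedRing A] [CompleteSpace A] (X : A)
    (hs : Summable fun k : ℕ => ‖X^k‖) :
    ∃ u : Aˣ, (u : A) = 1 - X ∧ ((u⁻¹ : Aˣ) : A) = ∑' k : ℕ, X^k ∧
      ‖((u⁻¹ : Aˣ) : A)‖ ≤ ∑' k : ℕ, ‖X^k‖ := by
  have hsx : Summable (fun k : ℕ => X^k) := hs.of_norm
  set S := ∑' k : ℕ, X^k with hSdef
  have hS : HasSum (fun k : ℕ => X^k) S := hsx.hasSum
  have hshift : ∑' k : ℕ, X^(k+1) = S - 1 := by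
    have h0 : S = X^0 + ∑' k : ℕ, X^(k+1) := Summable.tsum_eq_zero_add hsx
    rw [pow_zero] at h0
    rw [eq_sub_iff_add_eq, add_comm, ← h0]
  have hXS : X * S = S - 1 := by
    have h1 := (hS.mul_left X).tsum_eq
    have h2 : (fun k : ℕ => X * X^k) = fun k : ℕ => X^(k+1) := by
      funext k; rw [pow_succ']
    rw [h2] at h1
    rw [← h1, hshift]
  have hSX : S * X = S - 1 := by
    have h1 := (hS.mul_right X).tsum_eq
    have h2 : (fun k : ℕ => X^k * X) = fun k : ℕ => X^(k+1) := by
      funext k; rw [pow_succ]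
    rw [h2] at h1
    rw [← h1, hshift]
  have val_inv : (1 - X) * S = 1 := by
    rw [sub_mul, one_mul, hXS]; abel
  have inv_val : S * (1 - X) = 1 := by
    rw [mul_sub, mul_one, hSX]; abel
  refine ⟨⟨1 - X, S, val_inv, inv_val⟩, rfl, rfl, ?_⟩
  exact norm_tsum_le_tsum_norm hs

lemma one_sub_q_unit [Nontrivial H] (Q : H →L[ℂ] H) (c : ℕ → ℝ) (hc : Summable c)
    (hcn : ∀ k, 0 ≤ c k) (hQ : ∀ k : ℕ, ‖Q^(2*(k+1))‖ ≤ c k) :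
    ∃ u : (H →L[ℂ] H)ˣ, (u : H →L[ℂ] H) = 1 - Q ∧
      ‖((u⁻¹ : (H →L[ℂ] H)ˣ) : H →L[ℂ] H)‖ ≤ (1 + ‖Q‖) * (1 + ∑' k : ℕ, c k) := by
  set X := Q^2 with hXdef
  have hpow : ∀ k : ℕ, X^(k+1) = Q^(2*(k+1)) := by
    intro k; rw [hXdef, ← pow_mul]
  have hsucc : Summable (fun k : ℕ => ‖X^(k+1)‖) := by
    apply Summable.of_nonneg_of_le (fun k => norm_nonneg _) (fun k => ?_) hc
    rw [hpow]; exact hQ k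
  have hs : Summable (fun k : ℕ => ‖X^k‖) := by
    rwa [← summable_nat_add_iff 1]
  obtain ⟨u₂, hu₂, hS₂, hbound⟩ := neumann X hs
  set S₂ := ((u₂⁻¹ : (H →L[ℂ] H)ˣ) : H →L[ℂ] H) with hS₂def
  have hnorm_sum : ∑' k : ℕ, ‖X^k‖ ≤ 1 + ∑' k : ℕ, c k := by
    rw [Summable.tsum_eq_zero_add hs, pow_zero, norm_one]
    gcongr
    rw [hpow]; exact hQ _
  have hcomm : Commute (1 - Q) S₂ := by
    have h1 : Commute (1 - Q) ((u₂ : (H →L[ℂ] H)ˣ) : H →L[ℂ] H) := by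
      rw [hu₂, hXdef]
      have hq2 : Commute Q (Q^2) := (Commute.refl Q).pow_right 2
      have a1 : Commute (1 : H →L[ℂ] H) (1 - Q^2) := Commute.one_left _
      have a2 : Commute Q (1 - Q^2) := (Commute.one_right Q).sub_right hq2
      exact a1.sub_left a2
    exact h1.units_inv_right
  have hfact1 : (1 - Q) * (1 + Q) = 1 - X := by rw [hXdef]; noncomm_ring
  have hfact2 : (1 + Q) * (1 - Q) = 1 - X := by rw [hXdef]; noncomm_ring
  have val_inv : (1 - Q) * ((1 + Q) * S₂) = 1 := by
    rw [← mul_assoc, hfact1, ← hu₂]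
    exact u₂.val_inv
  have inv_val : ((1 + Q) * S₂) * (1 - Q) = 1 := by
    rw [mul_assoc, ← hcomm.eq, ← mul_assoc, hfact2, ← hu₂]
    exact u₂.val_inv
  refine ⟨⟨1 - Q, (1 + Q) * S₂, val_inv, inv_val⟩, rfl, ?_⟩
  show ‖(1 + Q) * S₂‖ ≤ _
  calc ‖(1 + Q) * S₂‖ ≤ ‖1 + Q‖ * ‖S₂‖ := norm_mul_le _ _
    _ ≤ (1 + ‖Q‖) * (1 + ∑' k : ℕ, c k) := by
        apply mul_le_mul
        · calc ‖1 + Q‖ ≤ ‖(1 : H →L[ℂ] H)‖ + ‖Q‖ := norm_add_le _ _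
            _ = 1 + ‖Q‖ := by rw [norm_one]
        · exact le_trans hbound hnorm_sum
        · exact norm_nonneg _
        · positivity

end AuxLemmas

variable {H : Type*} [NormedAddCommGroup H] [InnerProductSpace ℂ H] [CompleteSpace H]
  [TopologicalSpace.SeparableSpace H]

/-- spectral variation bound for a non-normal `A ∈ E_w(H)`:
`d̂(σ(B),σ(A)) ≤ ν·H_w(‖A-B‖/ν)` with `ν = |N|_ẇ̄`, where `G` is the inverse
of `F̃_ẇ̄` on `[0,∞)`, so that `ν·H_w(‖A-B‖/ν) = ν·(G(ν/‖A-B‖))⁻¹`. -/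
theorem stmt_12 (w : ℕ → ℝ) (hw : IsWeight w)
    (A D N : H →L[ℂ] H) (hA : MemE w A) (hSchur : IsSchurDecomp A D N)
    (hnn : ¬ IsStarNormal A) (hν : 0 < gaugeE (dbl (gmean w)) N)
    (C : ℝ) (hC : 0 < C)
    (hDos : ∀ Q : H →L[ℂ] H, IsCompactOperator Q → spectrum ℂ Q = {0} →
      ∀ k, 1 ≤ k →
        ‖Q ^ (2 * k)‖ ≤ C ^ (2 * k) * (∏ n ∈ Finset.Icc 1 k, sNum n Q) ^ 2)
    (G : ℝ → ℝ)
    (hG₁ : ∀ r, 0 ≤ r → G (Ftilde C (dbl (gmean w)) r) = r)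
    (hG₂ : ∀ y, 0 ≤ y → 0 ≤ G y ∧ Ftilde C (dbl (gmean w)) (G y) = y) :
    ∀ B : H →L[ℂ] H,
      specVar (spectrum ℂ B) (spectrum ℂ A) ≤
        gaugeE (dbl (gmean w)) N *
          (G (gaugeE (dbl (gmean w)) N / ‖A - B‖))⁻¹ := by
  intro B
  classical
  haveI hNT : Nontrivial H := by
    by_contra h
    rw [not_nontrivial_iff_subsingleton] at h
    exact hnn ⟨by ext x; exact Subsingleton.elim _ _⟩
  obtain ⟨hADN, hDcomp, hNcomp, hDnormal, -, hspecD, hspecN, hquasi⟩ := hSchur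
  set v : ℕ → ℝ := dbl (gmean w) with hvdef
  set ν : ℝ := gaugeE v N with hνdef
  have hvn : ∀ k, 0 ≤ v k := fun k => dbl_gmean_nonneg hw k
  have hsN : ∀ k, 1 ≤ k → sNum k N ≤ ν * v k := gauge_spec v hvn N hν
  set y : ℝ := ν / ‖A - B‖ with hydef
  have hy : 0 ≤ y := div_nonneg hν.le (norm_nonneg _)
  have hGy0 : 0 ≤ G y := (hG₂ y hy).1
  have hRHS : 0 ≤ ν * (G y)⁻¹ := mul_nonneg hν.le (inv_nonneg.mpr hGy0)
  rw [specVar]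
  apply Real.iSup_le _ hRHS
  rintro ⟨z, hz⟩
  show Metric.infDist z (spectrum ℂ A) ≤ ν * (G y)⁻¹
  set d : ℝ := Metric.infDist z (spectrum ℂ A) with hddef
  rcases le_or_gt d 0 with hd | hd
  · exact hd.trans hRHS
  have hzA : z ∉ spectrum ℂ A := by
    intro h
    have : d = 0 := Metric.infDist_zero_of_mem h
    rw [this] at hd
    exact lt_irrefl 0 hd
  have hdistA : ∀ μ ∈ spectrum ℂ A, d ≤ ‖z - μ‖ := by
    intro μ hμ
    have h5 : Metric.infDist z (spectrum ℂ A) ≤ dist z μ := Metric.infDist_le_dist_of_mem hμ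
    rwa [dist_eq_norm] at h5
  set T : H →L[ℂ] H := algebraMap ℂ (H →L[ℂ] H) z - D with hTdef
  have hzD : z ∉ spectrum ℂ D := by rw [hspecD]; exact hzA
  have hR : ‖Ring.inverse T‖ ≤ 1/d := by
    apply norm_ring_inverse_le D hDnormal z hzD hd
    intro μ hμ
    exact hdistA μ (hspecD ▸ hμ)
  set R : H →L[ℂ] H := Ring.inverse T with hRdef
  set Q : H →L[ℂ] H := R * N with hQdef
  have hQspec : spectrum ℂ Q = {0} := hquasi z hzA
  have hQcomp : IsCompactOperator Q := by
    have h1 : IsCompactOperator (⇑R ∘ ⇑N) := hNcomp.continuous_comp R.continuous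
    have h2 : ⇑Q = ⇑R ∘ ⇑N := rfl
    rw [show (Q : H → H) = ⇑R ∘ ⇑N from rfl]
    exact h1
  set r : ℝ := ν / d with hrdef
  have hrpos : 0 < r := div_pos hν hd
  have hνrd : ν = r * d := by
    rw [hrdef]; field_simp
  have hsQ : ∀ k, 1 ≤ k → sNum k Q ≤ r * v k := by
    intro k hk
    calc sNum k Q ≤ ‖R‖ * sNum k N := sNum_comp_le k hk R N
      _ ≤ (1/d) * (ν * v k) :=
          mul_le_mul hR (hsN k hk) (sNum_nonneg k N) (by positivity)
      _ = r * v k := by rw [hrdef]; field_simp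
  set c : ℕ → ℝ := fun k => (∏ n ∈ Finset.Icc 1 (k+1), v n)^2 * (C*r)^(2*(k+1)) with hcdef
  have hcsum : Summable c := summable_weight hw (by positivity)
  have hcnn : ∀ k, 0 ≤ c k := fun k => by rw [hcdef]; positivity
  have hck : ∀ k : ℕ, ‖Q^(2*(k+1))‖ ≤ c k := by
    intro k
    refine (hDos Q hQcomp hQspec (k+1) (by omega)).trans ?_
    have hprodnn : 0 ≤ ∏ n ∈ Finset.Icc 1 (k+1), sNum n Q :=
      Finset.prod_nonneg fun n _ => sNum_nonneg n Q
    have hprod : ∏ n ∈ Finset.Icc 1 (k+1), sNum n Q ≤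
        r^(k+1) * ∏ n ∈ Finset.Icc 1 (k+1), v n := by
      have h1 : ∏ n ∈ Finset.Icc 1 (k+1), sNum n Q ≤ ∏ n ∈ Finset.Icc 1 (k+1), (r * v n) :=
        Finset.prod_le_prod (fun n _ => sNum_nonneg n Q)
          (fun n hn => hsQ n (Finset.mem_Icc.mp hn).1)
      have h2 : ∏ n ∈ Finset.Icc 1 (k+1), (r * v n) =
          r^(k+1) * ∏ n ∈ Finset.Icc 1 (k+1), v n := by
        rw [Finset.prod_mul_distrib, Finset.prod_const, Nat.card_Icc]
        norm_num
      rw [← h2]; exact h1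
    have hsq : (∏ n ∈ Finset.Icc 1 (k+1), sNum n Q)^2 ≤
        (r^(k+1) * ∏ n ∈ Finset.Icc 1 (k+1), v n)^2 :=
      pow_le_pow_left₀ hprodnn hprod 2
    calc C ^ (2*(k+1)) * (∏ n ∈ Finset.Icc 1 (k+1), sNum n Q)^2
        ≤ C ^ (2*(k+1)) * (r^(k+1) * ∏ n ∈ Finset.Icc 1 (k+1), v n)^2 := by
          apply mul_le_mul_of_nonneg_left hsq (by positivity)
      _ = c k := by rw [hcdef]; ring
  obtain ⟨uQ, huQ, hbQ⟩ := one_sub_q_unit Q c hcsum hcnn hck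
  have hQnorm : ‖Q‖ ≤ r * v 1 := by
    calc ‖Q‖ ≤ ‖R‖ * ‖N‖ := norm_mul_le _ _
      _ ≤ (1/d) * (ν * v 1) := by
          apply mul_le_mul hR _ (norm_nonneg _) (by positivity)
          exact (norm_le_sNum_one N).trans (hsN 1 le_rfl)
      _ = r * v 1 := by rw [hrdef]; field_simp
  have hFwbound : ‖((uQ⁻¹ : (H →L[ℂ] H)ˣ) : H →L[ℂ] H)‖ ≤ Fw C v r := by
    refine hbQ.trans ?_
    rw [Fw]
    have htnn : 0 ≤ ∑' k : ℕ, c k := tsum_nonneg hcnn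
    have : ∑' (k : ℕ), (∏ n ∈ Finset.Icc 1 (k + 1), v n) ^ 2 * (C * r) ^ (2 * (k + 1)) =
        ∑' k : ℕ, c k := by rw [hcdef]
    rw [this]
    apply mul_le_mul_of_nonneg_right _ (by linarith)
    linarith [hQnorm]
  have hTu : IsUnit T := spectrum.notMem_iff.mp hzD
  obtain ⟨uT, huT⟩ := hTu
  have hTR : T * R = 1 := by
    rw [hRdef]
    exact Ring.mul_inverse_cancel T ⟨uT, huT⟩
  have hfact : algebraMap ℂ (H →L[ℂ] H) z - A = T * (1 - Q) := by
    rw [hADN, mul_sub, mul_one, hQdef, ← mul_assoc, hTR, one_mul, hTdef, sub_sub]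
  have huA : ((uT * uQ : (H →L[ℂ] H)ˣ) : H →L[ℂ] H) = algebraMap ℂ (H →L[ℂ] H) z - A := by
    rw [Units.val_mul, huT, huQ, ← hfact]
  have hAunit : IsUnit (algebraMap ℂ (H →L[ℂ] H) z - A) := ⟨uT * uQ, huA⟩
  have hRT : ((uT⁻¹ : (H →L[ℂ] H)ˣ) : H →L[ℂ] H) = R := by
    rw [hRdef, ← huT, Ring.inverse_unit]
  have hRAeq : Ring.inverse (algebraMap ℂ (H →L[ℂ] H) z - A) =
      ((uQ⁻¹ : (H →L[ℂ] H)ˣ) : H →L[ℂ] H) * ((uT⁻¹ : (H →L[ℂ] H)ˣ) : H →L[ℂ] H) := by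
    rw [← huA, Ring.inverse_unit, mul_inv_rev, Units.val_mul]
  have hFwpos : (1:ℝ) ≤ Fw C v r := Fw_one_le hw C hrpos.le
  have hRAnorm : ‖Ring.inverse (algebraMap ℂ (H →L[ℂ] H) z - A)‖ ≤ Fw C v r * (1/d) := by
    rw [hRAeq]
    calc ‖((uQ⁻¹ : (H →L[ℂ] H)ˣ) : H →L[ℂ] H) * ((uT⁻¹ : (H →L[ℂ] H)ˣ) : H →L[ℂ] H)‖
        ≤ ‖((uQ⁻¹ : (H →L[ℂ] H)ˣ) : H →L[ℂ] H)‖ * ‖((uT⁻¹ : (H →L[ℂ] H)ˣ) : H →L[ℂ] H)‖ :=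
          norm_mul_le _ _
      _ ≤ Fw C v r * (1/d) := by
          apply mul_le_mul hFwbound _ (norm_nonneg _) (by linarith)
          rw [hRT]; exact hR
  have hkey : (1:ℝ) ≤ ‖Ring.inverse (algebraMap ℂ (H →L[ℂ] H) z - A)‖ * ‖A - B‖ := by
    by_contra hcon
    push_neg at hcon
    have hsmall : ‖Ring.inverse (algebraMap ℂ (H →L[ℂ] H) z - A) * (B - A)‖ < 1 := by
      calc ‖Ring.inverse (algebraMap ℂ (H →L[ℂ] H) z - A) * (B - A)‖
          ≤ ‖Ring.inverse (algebraMap ℂ (H →L[ℂ] H) z - A)‖ * ‖B - A‖ := norm_mul_le _ _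
        _ = ‖Ring.inverse (algebraMap ℂ (H →L[ℂ] H) z - A)‖ * ‖A - B‖ := by
            rw [norm_sub_rev]
        _ < 1 := hcon
    have hzB_eq : algebraMap ℂ (H →L[ℂ] H) z - B =
        (algebraMap ℂ (H →L[ℂ] H) z - A) *
          (1 - Ring.inverse (algebraMap ℂ (H →L[ℂ] H) z - A) * (B - A)) := by
      rw [mul_sub, mul_one, ← mul_assoc, Ring.mul_inverse_cancel _ hAunit, one_mul]
      abel
    have : IsUnit (algebraMap ℂ (H →L[ℂ] H) z - B) := by
      rw [hzB_eq]
      exact hAunit.mul (Units.oneSub _ hsmall).isUnit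
    exact (spectrum.mem_iff.mp hz) this
  have hABpos : 0 < ‖A - B‖ := by
    rcases (norm_nonneg (A - B)).lt_or_eq with h | h
    · exact h
    · exfalso
      rw [← h, mul_zero] at hkey
      linarith
  have h1d : d ≤ Fw C v r * ‖A - B‖ := by
    have h2 := mul_le_mul_of_nonneg_right hRAnorm (norm_nonneg (A - B))
    have h3 : (1:ℝ) ≤ Fw C v r * (1/d) * ‖A - B‖ := le_trans hkey h2
    have h4 := mul_le_mul_of_nonneg_left h3 hd.le
    calc d = d * 1 := (mul_one d).symm
      _ ≤ d * (Fw C v r * (1/d) * ‖A - B‖) := h4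
      _ = Fw C v r * ‖A - B‖ := by field_simp
  have hy_le : y ≤ Ftilde C v r := by
    rw [hydef, div_le_iff₀ hABpos, Ftilde, hνrd]
    calc r * d ≤ r * (Fw C v r * ‖A - B‖) := mul_le_mul_of_nonneg_left h1d hrpos.le
      _ = r * Fw C v r * ‖A - B‖ := by ring
  have hGyr : G y ≤ r := by
    by_contra h
    push_neg at h
    have hlt : Ftilde C v r < Ftilde C v (G y) := Ftilde_lt hw hC hrpos.le h
    have heq : Ftilde C v (G y) = y := (hG₂ y hy).2
    linarith
  have hypos : 0 < y := div_pos hν hABpos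
  have hGypos : 0 < G y := by
    rcases hGy0.lt_or_eq with h | h
    · exact h
    · exfalso
      have heq : Ftilde C v (G y) = y := (hG₂ y hy).2
      rw [← h] at heq
      rw [Ftilde, zero_mul] at heq
      linarith
  rw [← div_eq_mul_inv, le_div_iff₀ hGypos]
  calc d * G y ≤ d * r := mul_le_mul_of_nonneg_left hGyr hd.le
    _ = ν := by rw [hνrd]; ring

end
end
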